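/- If ω : ℝ² → ℝ is nonnegative, supported in the cone C = {(r,θ) : 3π/8 < |θ| < 5π/8}, and its 2k-th angular Fourier coefficient ω_{2k}(r) = (1/π)∫_{-π}^{π} ω(r,θ) cos(2kθ) dθ, then |ω_{2k}(r)| ≤ √2 · |ω_2(r)| for all r ≥ 0 and all k ≥ 1. -/

import Mathlib

open MeasureTheory Real

theorem fourier_mode_domination (ω : ℝ → ℝ → ℝ)
    (hnonneg : ∀ r θ, 0 ≤ ω r θ)
    (hint : ∀ r, MeasureTheory.IntegrableOn (ω r) (Set.Icc (-Real.pi) Real.pi))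
    (hsupp : ∀ r θ, ¬ (3 * Real.pi / 8 < |θ| ∧ |θ| < 5 * Real.pi / 8) → ω r θ = 0) :
    ∀ r ≥ (0:ℝ), ∀ k : ℕ, 1 ≤ k →
      |(1 / Real.pi) * ∫ θ in Set.Icc (-Real.pi) Real.pi, ω r θ * Real.cos (2 * k * θ)|
        ≤ Real.sqrt 2 *
          |(1 / Real.pi) * ∫ θ in Set.Icc (-Real.pi) Real.pi, ω r θ * Real.cos (2 * θ)| := by
  intro r _hr k _hk
  have hπ := Real.pi_pos
  set S := Set.Icc (-Real.pi) Real.pi with hS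
  have hω := hint r
  have hcont : ∀ c : ℝ, MeasureTheory.IntegrableOn
      (fun θ => ω r θ * Real.cos (c * θ)) S := by
    intro c
    have : MeasureTheory.IntegrableOn
        (fun θ => Real.cos (c * θ) * ω r θ) S := by
      apply MeasureTheory.Integrable.bdd_mul (c := 1) hω
      · exact (Real.continuous_cos.comp (continuous_const.mul continuous_id)).aestronglyMeasurable
      · exact Filter.Eventually.of_forall fun x => by simpa using Real.abs_cos_le_one (c * x)
    simpa [mul_comm] using this
  -- pointwise bound for the mode 2
  have hpt : ∀ θ : ℝ, ω r θ * Real.cos (2 * θ) ≤ -(Real.sqrt 2 / 2) * ω r θ := by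
    intro θ
    by_cases h : 3 * Real.pi / 8 < |θ| ∧ |θ| < 5 * Real.pi / 8
    · have habs : |2 * |θ| - Real.pi| ≤ Real.pi / 4 := by
        rw [abs_le]
        constructor <;> [linarith [h.1, abs_nonneg θ]; linarith [h.2]]
      have hc1 : Real.cos (Real.pi / 4) ≤ Real.cos |2 * |θ| - Real.pi| := by
        apply Real.cos_le_cos_of_nonneg_of_le_pi (abs_nonneg _) (by linarith)
        exact habs
      have h2θ : |2 * θ| = 2 * |θ| := by rw [abs_mul]; norm_num
      have hc2 : Real.cos (2 * θ) = -Real.cos (2 * |θ| - Real.pi) := by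
        rw [Real.cos_sub_pi, neg_neg, ← h2θ, Real.cos_abs]
      rw [Real.cos_abs] at hc1
      rw [Real.cos_pi_div_four] at hc1
      have hcos : Real.cos (2 * θ) ≤ -(Real.sqrt 2 / 2) := by
        rw [hc2]; linarith
      nlinarith [hnonneg r θ, mul_le_mul_of_nonneg_left hcos (hnonneg r θ)]
    · rw [hsupp r θ h]; simp
  have hI0 : 0 ≤ ∫ θ in S, ω r θ := MeasureTheory.integral_nonneg fun θ => hnonneg r θ
  have h2 : (∫ θ in S, ω r θ * Real.cos (2 * θ))
      ≤ -(Real.sqrt 2 / 2) * ∫ θ in S, ω r θ := by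
    have := MeasureTheory.integral_mono (hcont 2) (hω.const_mul (-(Real.sqrt 2 / 2))) hpt
    rwa [MeasureTheory.integral_const_mul] at this
  have h3 : |∫ θ in S, ω r θ * Real.cos (2 * (k:ℝ) * θ)| ≤ ∫ θ in S, ω r θ := by
    calc |∫ θ in S, ω r θ * Real.cos (2 * (k:ℝ) * θ)|
        ≤ ∫ θ in S, |ω r θ * Real.cos (2 * (k:ℝ) * θ)| :=
          by simpa only [Real.norm_eq_abs] using
            MeasureTheory.norm_integral_le_integral_norm
              (fun θ => ω r θ * Real.cos (2 * (k:ℝ) * θ)) (μ := MeasureTheory.volume.restrict S)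
      _ ≤ ∫ θ in S, ω r θ := by
          apply MeasureTheory.integral_mono (hcont (2 * (k:ℝ))).abs hω
          intro θ
          show |ω r θ * Real.cos (2 * (k:ℝ) * θ)| ≤ ω r θ
          rw [abs_mul, abs_of_nonneg (hnonneg r θ)]
          calc ω r θ * |Real.cos (2 * (k:ℝ) * θ)| ≤ ω r θ * 1 :=
                mul_le_mul_of_nonneg_left (Real.abs_cos_le_one _) (hnonneg r θ)
            _ = ω r θ := mul_one _
  have hs2 : Real.sqrt 2 * Real.sqrt 2 = 2 := Real.mul_self_sqrt (by norm_num)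
  have hs2pos : 0 < Real.sqrt 2 := Real.sqrt_pos.mpr (by norm_num)
  have hB : Real.sqrt 2 / 2 * (∫ θ in S, ω r θ)
      ≤ |∫ θ in S, ω r θ * Real.cos (2 * θ)| := by
    have hneg : (∫ θ in S, ω r θ * Real.cos (2 * θ)) ≤ 0 := by nlinarith
    rw [abs_of_nonpos hneg]; linarith
  have key : |∫ θ in S, ω r θ * Real.cos (2 * (k:ℝ) * θ)|
      ≤ Real.sqrt 2 * |∫ θ in S, ω r θ * Real.cos (2 * θ)| := by
    nlinarith [abs_nonneg (∫ θ in S, ω r θ * Real.cos (2 * θ))]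
  rw [abs_mul, abs_mul, abs_of_pos (by positivity : (0:ℝ) < 1 / Real.pi)]
  calc 1 / Real.pi * |∫ θ in S, ω r θ * Real.cos (2 * (k:ℝ) * θ)|
      ≤ 1 / Real.pi * (Real.sqrt 2 * |∫ θ in S, ω r θ * Real.cos (2 * θ)|) :=
        mul_le_mul_of_nonneg_left key (by positivity)
    _ = Real.sqrt 2 * (1 / Real.pi * |∫ θ in S, ω r θ * Real.cos (2 * θ)|) := by ring
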